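/- Let G be a connected graph and let P be a longest path in G with endpoints u and v. Then the number of vertices of P is at least min{|V(G)|, deg(u) + deg(v) + 1}. -/

import Mathlib

open SimpleGraph Walk

lemma walk_getVert_eq_support_getElem {V : Type*} {G : SimpleGraph V} {u v : V}
    (p : G.Walk u v) : ∀ (i : ℕ), i ≤ p.length →
      ∀ (h : i < p.support.length), p.getVert i = p.support[i] := by
  induction p with
  | nil => intro i hi h; simp at hi; subst hi; simp
  | cons hadj q ih =>
    intro i hi h
    cases i with
    | zero => simp
    | succ n =>
      simp only [Walk.support_cons, List.getElem_cons_succ, Walk.getVert_cons_succ]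
      exact ih n (by simpa using hi) _

/-- **Dirac-type lemma.** If `P` is a longest path in a connected graph `G` with ends `u` and `v`,
then `|V(P)| ≥ min {|V(G)|, deg u + deg v + 1}`. -/
theorem stmt_3 {V : Type*} [Fintype V] [DecidableEq V] (G : SimpleGraph V)
    [DecidableRel G.Adj] (hconn : G.Connected) {u v : V} (P : G.Walk u v)
    (hP : P.IsPath) (hlongest : ∀ (a b : V) (Q : G.Walk a b), Q.IsPath → Q.length ≤ P.length) :
    min (Fintype.card V) (G.degree u + G.degree v + 1) ≤ P.support.length := by
  have hsl : P.support.length = P.length + 1 := P.length_support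
  by_cases h1 : G.degree u + G.degree v + 1 ≤ P.support.length
  · exact le_trans (min_le_right _ _) h1
  by_cases h2 : Fintype.card V ≤ P.support.length
  · exact le_trans (min_le_left _ _) h2
  exfalso
  push_neg at h1 h2
  set L := P.length with hL
  have hdeg : L + 1 ≤ G.degree u + G.degree v := by omega
  -- all neighbors of u are on P
  have hNu : ∀ x, G.Adj u x → x ∈ P.support := by
    intro x hx
    by_contra hxs
    have hpath : (Walk.cons hx.symm P).IsPath := hP.cons hxs
    have := hlongest _ _ _ hpath
    simp only [Walk.length_cons] at this
    omega
  -- all neighbors of v are on P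
  have hNv : ∀ x, G.Adj v x → x ∈ P.support := by
    intro x hx
    by_contra hxs
    have hpath : (P.concat hx).IsPath := by
      rw [Walk.isPath_def, Walk.support_concat]
      rw [← List.concat_eq_append]
      exact List.Nodup.concat hxs hP.support_nodup
    have := hlongest _ _ _ hpath
    rw [Walk.length_concat] at this
    omega
  -- crossing chord
  set A : Finset (Fin L) :=
    Finset.univ.filter (fun i : Fin L => G.Adj u (P.getVert ((i : ℕ) + 1))) with hA
  set B : Finset (Fin L) :=
    Finset.univ.filter (fun i : Fin L => G.Adj v (P.getVert (i : ℕ))) with hB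
  have hAcard : G.degree u ≤ A.card := by
    have hsub : G.neighborFinset u ⊆ A.image (fun i : Fin L => P.getVert ((i : ℕ) + 1)) := by
      intro x hx
      rw [SimpleGraph.mem_neighborFinset] at hx
      obtain ⟨n, hn, hnL⟩ := Walk.mem_support_iff_exists_getVert.mp (hNu x hx)
      have hn0 : n ≠ 0 := by
        rintro rfl
        rw [Walk.getVert_zero] at hn
        exact G.irrefl (hn ▸ hx)
      refine Finset.mem_image.mpr ⟨⟨n - 1, by omega⟩, ?_, ?_⟩
      · rw [hA, Finset.mem_filter]
        refine ⟨Finset.mem_univ _, ?_⟩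
        have : n - 1 + 1 = n := by omega
        rw [this, hn]
        exact hx
      · have : n - 1 + 1 = n := by omega
        simp only [this, hn]
    calc G.degree u = (G.neighborFinset u).card := rfl
      _ ≤ (A.image (fun i : Fin L => P.getVert ((i : ℕ) + 1))).card := Finset.card_le_card hsub
      _ ≤ A.card := Finset.card_image_le
  have hBcard : G.degree v ≤ B.card := by
    have hsub : G.neighborFinset v ⊆ B.image (fun i : Fin L => P.getVert (i : ℕ)) := by
      intro x hx
      rw [SimpleGraph.mem_neighborFinset] at hx
      obtain ⟨n, hn, hnL⟩ := Walk.mem_support_iff_exists_getVert.mp (hNv x hx)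
      have hnL' : n ≠ L := by
        rintro rfl
        rw [Walk.getVert_length] at hn
        exact G.irrefl (hn ▸ hx)
      refine Finset.mem_image.mpr ⟨⟨n, by omega⟩, ?_, ?_⟩
      · rw [hB, Finset.mem_filter]
        exact ⟨Finset.mem_univ _, by rw [hn]; exact hx⟩
      · exact hn
    calc G.degree v = (G.neighborFinset v).card := rfl
      _ ≤ (B.image (fun i : Fin L => P.getVert (i : ℕ))).card := Finset.card_le_card hsub
      _ ≤ B.card := Finset.card_image_le
  have hnotdisj : ¬ Disjoint A B := by
    intro hdisj
    have hcu : (A ∪ B).card ≤ Fintype.card (Fin L) := Finset.card_le_univ _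
    rw [Finset.card_union_of_disjoint hdisj, Fintype.card_fin] at hcu
    omega
  obtain ⟨i, hiA, hiB⟩ := Finset.not_disjoint_iff.mp hnotdisj
  have hu' : G.Adj u (P.getVert ((i : ℕ) + 1)) := (Finset.mem_filter.mp hiA).2
  have hv' : G.Adj v (P.getVert (i : ℕ)) := (Finset.mem_filter.mp hiB).2
  -- vertex outside P
  have hzex : ∃ z, z ∉ P.support := by
    by_contra hall
    push_neg at hall
    have hsub : (Finset.univ : Finset V) ⊆ P.support.toFinset :=
      fun z _ => List.mem_toFinset.mpr (hall z)
    have := Finset.card_le_card hsub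
    rw [List.toFinset_card_of_nodup hP.support_nodup] at this
    simp only [Finset.card_univ] at this
    omega
  obtain ⟨z0, hz0⟩ := hzex
  -- boundary dart
  obtain ⟨W⟩ := hconn.preconnected u z0
  obtain ⟨d, _, hdfst, hdsnd⟩ := W.exists_boundary_dart {a | a ∈ P.support} P.start_mem_support hz0
  -- build the cycle
  set w : V := P.getVert (i : ℕ) with hwdef
  have hwmem : w ∈ P.support := Walk.mem_support_iff_exists_getVert.mpr ⟨i, rfl, by omega⟩
  set P1 : G.Walk u w := P.takeUntil w hwmem with hP1
  set P2 : G.Walk w v := P.dropUntil w hwmem with hP2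
  have hspec : P1.append P2 = P := P.take_spec hwmem
  have hP1len : P1.length ≤ L := P.length_takeUntil_le hwmem
  -- index of w in P is i
  have hgetElemInj : ∀ (a b : ℕ) (ha : a < P.support.length) (hb : b < P.support.length),
      P.support[a] = P.support[b] → a = b := by
    intro a b ha hb hab
    exact (List.Nodup.getElem_inj_iff hP.support_nodup).mp hab
  have hwne : w ≠ v := by
    intro hwv
    have h1' : P.getVert (i : ℕ) = P.support[(i : ℕ)]'(by omega) :=
      walk_getVert_eq_support_getElem P i (by omega) _
    have h2' : P.getVert L = P.support[L]'(by omega) :=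
      walk_getVert_eq_support_getElem P L (by omega) _
    have : (i : ℕ) = L := by
      apply hgetElemInj _ _ (by omega) (by omega)
      rw [← h1', ← h2', Walk.getVert_length, ← hwdef, hwv]
    omega
  have hP2nil : ¬ P2.Nil := Walk.not_nil_of_ne hwne
  obtain ⟨x, h2adj, Q2, hP2eq⟩ := Walk.not_nil_iff.mp hP2nil
  have hsupP : P.support = P1.support ++ Q2.support := by
    conv_lhs => rw [← hspec]
    rw [Walk.support_append, hP2eq, Walk.support_cons, List.tail_cons]
  have hP1slen : P1.support.length = P1.length + 1 := P1.length_support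
  have hlen1 : P1.length = (i : ℕ) := by
    apply hgetElemInj _ _ (by omega) (by omega)
    have hl : P.support[P1.length]'(by omega) = P1.support[P1.length]'(by omega) := by
      rw [List.getElem_of_eq hsupP (by omega)]
      exact List.getElem_append_left (by omega)
    have hr : P1.support[P1.length]'(by omega) = w := by
      rw [← walk_getVert_eq_support_getElem P1 P1.length le_rfl, Walk.getVert_length]
    rw [hl, hr, ← walk_getVert_eq_support_getElem P (i : ℕ) (by omega)]
  have hxval : x = P.getVert ((i : ℕ) + 1) := by
    have hQ2slen : Q2.support.length = Q2.length + 1 := Q2.length_support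
    have hPslen2 : P.support.length = P1.support.length + Q2.support.length := by
      rw [hsupP, List.length_append]
    have hi1 : (i : ℕ) + 1 < P.support.length := by omega
    have hgr : P.support[(i : ℕ) + 1]'hi1 = Q2.support[0]'(by omega) := by
      rw [List.getElem_of_eq hsupP hi1]
      rw [List.getElem_append_right (by omega)]
      congr 1
      omega
    have hx0 : Q2.support[0]'(by omega) = x := by
      rw [← walk_getVert_eq_support_getElem Q2 0 (by omega), Walk.getVert_zero]
    rw [← hx0, ← hgr, walk_getVert_eq_support_getElem P ((i : ℕ) + 1) (by omega)]
  have hux : G.Adj u x := hxval ▸ hu'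
  set C : G.Walk u u := Walk.cons hux (Q2.append (Walk.cons hv' P1.reverse)) with hC
  have hClen : C.length = L + 1 := by
    have : P1.length + P2.length = L := by
      have := congrArg Walk.length hspec
      rwa [Walk.length_append] at this
    have hP2l : P2.length = Q2.length + 1 := by rw [hP2eq, Walk.length_cons]
    rw [hC, Walk.length_cons, Walk.length_append, Walk.length_cons, Walk.length_reverse]
    omega
  have hCtail : C.support.tail = Q2.support ++ (P1.support.reverse) := by
    rw [hC, Walk.support_cons, List.tail_cons, Walk.support_append, Walk.support_cons,
      List.tail_cons, Walk.support_reverse]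
  have hCperm : List.Perm C.support.tail P.support := by
    rw [hCtail, hsupP]
    exact List.perm_append_comm.trans ((P1.support.reverse_perm).append_right _)
  -- rotate the cycle at the boundary vertex
  set y : V := d.fst with hy
  set z : V := d.snd with hz
  have hyz : G.Adj y z := d.adj
  have hymem : y ∈ P.support := hdfst
  have hzmem : z ∉ P.support := hdsnd
  have hyC : y ∈ C.support := by
    have : y ∈ C.support.tail := hCperm.mem_iff.mpr hymem
    rw [Walk.support_eq_cons C]
    exact List.mem_cons_of_mem _ this
  set C' : G.Walk y y := C.rotate y hyC with hC'
  have hC'len : C'.length = L + 1 := by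
    have h1' := congrArg Walk.length (C.take_spec hyC)
    rw [Walk.length_append] at h1'
    rw [hC', Walk.rotate, Walk.length_append]
    omega
  have hC'perm : List.Perm C'.support.tail P.support :=
    ((C.support_rotate y hyC).perm).trans hCperm
  have hC'nil : ¬ C'.Nil := by rw [Walk.not_nil_iff_lt_length]; omega
  obtain ⟨m, h3adj, Q3, hC'eq⟩ := Walk.not_nil_iff.mp hC'nil
  have hQ3supp : Q3.support = C'.support.tail := by
    rw [hC'eq, Walk.support_cons, List.tail_cons]
  have hQ3perm : List.Perm Q3.support P.support := hQ3supp ▸ hC'perm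
  have hQ3path : Q3.IsPath := Walk.IsPath.mk' (hQ3perm.nodup_iff.mpr hP.support_nodup)
  have hQ3len : Q3.length = L := by
    have := hC'len
    rw [hC'eq, Walk.length_cons] at this
    omega
  have hzQ3 : z ∉ Q3.support := fun hmem => hzmem (hQ3perm.mem_iff.mp hmem)
  -- extend to a longer path
  have hQ4path : (Q3.concat hyz).IsPath := by
    rw [Walk.isPath_def, Walk.support_concat]
    rw [← List.concat_eq_append]
    exact List.Nodup.concat hzQ3 hQ3path.support_nodup
  have := hlongest _ _ _ hQ4path
  rw [Walk.length_concat] at this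
  omega
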